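/- If S and T are positive semidefinite real symmetric bilinear forms on a finite-dimensional real inner product space V, each written as a sum of rank-one forms, then for any complex 2-vector φ = Σ φ^{ij} e_i ∧ e_j (with φ^{ij} antisymmetric complex coefficients), the Kulkarni–Nomizu product satisfies (S ⊼ T)(φ, φ̄) = 4 Σ_{i,j,k,l} φ^{ij} conj(φ^{kl}) S_{ik} T_{jl} ≥ 0. -/
import Mathlib


open Finset
open scoped ComplexConjugate RealInnerProductSpace ComplexOrder

private lemma sum_comm6 {M : Type*} [AddCommMonoid M] {n₁ n₂ n₃ n₄ n₅ n₆ : ℕ}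
    (f : Fin n₁ → Fin n₂ → Fin n₃ → Fin n₄ → Fin n₅ → Fin n₆ → M) :
    (∑ i, ∑ j, ∑ k, ∑ l, ∑ a, ∑ b, f i j k l a b)
      = ∑ a, ∑ b, ∑ i, ∑ j, ∑ k, ∑ l, f i j k l a b := by
  calc (∑ i, ∑ j, ∑ k, ∑ l, ∑ a, ∑ b, f i j k l a b)
      = ∑ i, ∑ j, ∑ k, ∑ a, ∑ l, ∑ b, f i j k l a b :=
        Finset.sum_congr rfl fun i _ => Finset.sum_congr rfl fun j _ =>
          Finset.sum_congr rfl fun k _ => Finset.sum_comm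
    _ = ∑ i, ∑ j, ∑ a, ∑ k, ∑ l, ∑ b, f i j k l a b :=
        Finset.sum_congr rfl fun i _ => Finset.sum_congr rfl fun j _ => Finset.sum_comm
    _ = ∑ i, ∑ a, ∑ j, ∑ k, ∑ l, ∑ b, f i j k l a b :=
        Finset.sum_congr rfl fun i _ => Finset.sum_comm
    _ = ∑ a, ∑ i, ∑ j, ∑ k, ∑ l, ∑ b, f i j k l a b := Finset.sum_comm
    _ = ∑ a, ∑ i, ∑ j, ∑ k, ∑ b, ∑ l, f i j k l a b :=
        Finset.sum_congr rfl fun a _ => Finset.sum_congr rfl fun i _ =>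
          Finset.sum_congr rfl fun j _ => Finset.sum_congr rfl fun k _ => Finset.sum_comm
    _ = ∑ a, ∑ i, ∑ j, ∑ b, ∑ k, ∑ l, f i j k l a b :=
        Finset.sum_congr rfl fun a _ => Finset.sum_congr rfl fun i _ =>
          Finset.sum_congr rfl fun j _ => Finset.sum_comm
    _ = ∑ a, ∑ i, ∑ b, ∑ j, ∑ k, ∑ l, f i j k l a b :=
        Finset.sum_congr rfl fun a _ => Finset.sum_congr rfl fun i _ => Finset.sum_comm
    _ = ∑ a, ∑ b, ∑ i, ∑ j, ∑ k, ∑ l, f i j k l a b :=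
        Finset.sum_congr rfl fun a _ => Finset.sum_comm

private lemma sum_swap_pairs {M : Type*} [AddCommMonoid M] {n : ℕ}
    (f : Fin n → Fin n → Fin n → Fin n → M) :
    (∑ i, ∑ j, ∑ k, ∑ l, f i j k l) = ∑ k, ∑ l, ∑ i, ∑ j, f i j k l := by
  calc (∑ i, ∑ j, ∑ k, ∑ l, f i j k l)
      = ∑ i, ∑ k, ∑ j, ∑ l, f i j k l :=
        Finset.sum_congr rfl fun i _ => Finset.sum_comm
    _ = ∑ k, ∑ i, ∑ j, ∑ l, f i j k l := Finset.sum_comm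
    _ = ∑ k, ∑ i, ∑ l, ∑ j, f i j k l :=
        Finset.sum_congr rfl fun k _ => Finset.sum_congr rfl fun i _ => Finset.sum_comm
    _ = ∑ k, ∑ l, ∑ i, ∑ j, f i j k l :=
        Finset.sum_congr rfl fun k _ => Finset.sum_comm

/-- If `S` and `T` are positive semidefinite real symmetric bilinear forms on a
finite-dimensional real inner product space `V` (each written as a sum of rank-one forms),
then for any complex 2-vector with antisymmetric coefficients `φ`, the Kulkarni–Nomizu
product `(S ⊼ T)(φ, φ̄) = 4 ∑ φ^{ij} conj(φ^{kl}) S_{ik} T_{jl}` is nonnegative. -/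
theorem kulkarni_nomizu_nonneg
    {V : Type*} [NormedAddCommGroup V] [InnerProductSpace ℝ V] [FiniteDimensional ℝ V]
    {n m m' : ℕ} (e : Fin n → V) (he : Orthonormal ℝ e)
    (S T : V → V → ℝ) (v : Fin m → V) (w : Fin m' → V)
    (hSsymm : ∀ x y, S x y = S y x) (hTsymm : ∀ x y, T x y = T y x)
    (hS : ∀ x y, S x y = ∑ a, ⟪v a, x⟫ * ⟪v a, y⟫)
    (hT : ∀ x y, T x y = ∑ b, ⟪w b, x⟫ * ⟪w b, y⟫)
    (φ : Fin n → Fin n → ℂ) (hφ : ∀ i j, φ i j = -φ j i) :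
    0 ≤ 4 * ∑ i, ∑ j, ∑ k, ∑ l,
        φ i j * conj (φ k l) * ((S (e i) (e k) : ℝ) : ℂ) * ((T (e j) (e l) : ℝ) : ℂ) := by
  have key : (∑ i, ∑ j, ∑ k, ∑ l,
      φ i j * conj (φ k l) * ((S (e i) (e k) : ℝ) : ℂ) * ((T (e j) (e l) : ℝ) : ℂ))
      = ∑ a, ∑ b,
          (∑ i, ∑ j, φ i j * ((⟪v a, e i⟫ : ℝ) : ℂ) * ((⟪w b, e j⟫ : ℝ) : ℂ)) *
          conj (∑ i, ∑ j, φ i j * ((⟪v a, e i⟫ : ℝ) : ℂ) * ((⟪w b, e j⟫ : ℝ) : ℂ)) := by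
    have step1 : (∑ i, ∑ j, ∑ k, ∑ l,
        φ i j * conj (φ k l) * ((S (e i) (e k) : ℝ) : ℂ) * ((T (e j) (e l) : ℝ) : ℂ))
        = ∑ i, ∑ j, ∑ k, ∑ l, ∑ a, ∑ b,
            (φ i j * ((⟪v a, e i⟫ : ℝ) : ℂ) * ((⟪w b, e j⟫ : ℝ) : ℂ)) *
            (conj (φ k l) * ((⟪v a, e k⟫ : ℝ) : ℂ) * ((⟪w b, e l⟫ : ℝ) : ℂ)) := by
      refine Finset.sum_congr rfl fun i _ => Finset.sum_congr rfl fun j _ =>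
        Finset.sum_congr rfl fun k _ => Finset.sum_congr rfl fun l _ => ?_
      rw [hS, hT]
      push_cast
      simp only [Finset.sum_mul, Finset.mul_sum]
      rw [Finset.sum_comm]
      refine Finset.sum_congr rfl fun a _ => ?_
      refine Finset.sum_congr rfl fun b _ => ?_
      ring
    rw [step1, sum_comm6]
    refine Finset.sum_congr rfl fun a _ => Finset.sum_congr rfl fun b _ => ?_
    simp only [map_sum, map_mul, Complex.conj_ofReal, Finset.sum_mul, Finset.mul_sum]
    rw [sum_swap_pairs]
  rw [key]
  have h4 : (0:ℂ) ≤ 4 := by norm_num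
  refine mul_nonneg h4 (Finset.sum_nonneg fun a _ => Finset.sum_nonneg fun b _ => ?_)
  rw [Complex.mul_conj]
  exact_mod_cast Complex.normSq_nonneg _
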